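/- For every integer d ≥ 3 there exists an exact-repair regenerating code with parameters (n,k,d) = (d+1, d, d) and secondary parameters (B, α, β) = (d² − 1, d, d − 1), where Shannon entropy is taken in bits (base 2). In particular, for this code B equals B_{k−1} and is strictly smaller than both B_k and B_{k−2}. -/

import Mathlib

open Finset

/-- Shannon entropy (base 2) of a finitely-valued random variable `X` on a finite
probability space with mass function `P`. -/
noncomputable def entH {Ω S : Type*} [Fintype Ω] (P : Ω → ℝ) (X : Ω → S) : ℝ :=
  letI := Classical.decEq S
  ∑ s ∈ Finset.univ.image X,
    -((∑ ω ∈ Finset.univ.filter (fun ω => X ω = s), P ω) *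
       Real.logb 2 (∑ ω ∈ Finset.univ.filter (fun ω => X ω = s), P ω))

/-- Conditional entropy `H(X | Y) = H(X, Y) - H(Y)`. -/
noncomputable def condH {Ω S T : Type*} [Fintype Ω] (P : Ω → ℝ) (X : Ω → S) (Y : Ω → T) : ℝ :=
  entH P (fun ω => (X ω, Y ω)) - entH P Y

/-- The joint random variable `W_J = (W_j : j ∈ J)`. -/
def jointW {Ω : Type*} {n : ℕ} {σW : Fin n → Type*} (W : ∀ j, Ω → σW j)
    (J : Finset (Fin n)) : Ω → ∀ j : J, σW j.1 :=
  fun ω j => W j.1 ω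

/-- The joint random variable `(S_i^j : (i,j) ∈ E)` for a set `E` of pairs. -/
def jointS {Ω : Type*} {n : ℕ} {σS : Fin n → Fin n → Type*} (S : ∀ i j, Ω → σS i j)
    (E : Finset (Fin n × Fin n)) : Ω → ∀ e : E, σS e.1.1 e.1.2 :=
  fun ω e => S e.1.1 e.1.2 ω

/-- The joint random variable `S_I^j = (S_i^j : i ∈ I)`. -/
def jointSto {Ω : Type*} {n : ℕ} {σS : Fin n → Fin n → Type*} (S : ∀ i j, Ω → σS i j)
    (I : Finset (Fin n)) (j : Fin n) : Ω → ∀ i : I, σS i.1 j :=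
  fun ω i => S i.1 j ω

/-- An exact-repair regenerating code with parameters `(n,k,d)` (with `1 ≤ k ≤ d ≤ n-1`)
and secondary parameters `(B,α,β)`: the file `M`, the stored data `W j` on server `j`
(servers indexed by `Fin n`, server `j` of the paper being index `j-1`), and the helper
information `S i j` sent from server `i` to repair server `j`. -/
structure IsRegenCode {Ω : Type*} [Fintype Ω] (n k d : ℕ) (B α β : ℝ) (P : Ω → ℝ)
    {σM : Type*} {σW : Fin n → Type*} {σS : Fin n → Fin n → Type*}
    (M : Ω → σM) (W : ∀ j, Ω → σW j) (S : ∀ i j, Ω → σS i j) : Prop where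
  prob_nonneg : ∀ ω, 0 ≤ P ω
  prob_sum : ∑ ω, P ω = 1
  hk : 1 ≤ k
  hkd : k ≤ d
  hdn : d + 1 ≤ n
  hB : 0 ≤ B
  hα : 0 ≤ α
  hβ : 0 ≤ β
  hMB : entH P M = B
  hWα : ∀ j, entH P (W j) = α
  hWM : ∀ j, condH P (W j) M = 0
  hMW : ∀ J : Finset (Fin n), k ≤ J.card → condH P M (jointW W J) = 0
  hSβ : ∀ i j, i ≠ j → entH P (S i j) = β
  hSW : ∀ i j, i ≠ j → condH P (S i j) (W i) = 0
  hWS : ∀ (j : Fin n) (I : Finset (Fin n)), d ≤ I.card → j ∉ I →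
    condH P (W j) (jointSto S I j) = 0

/-- `B_q = qα + ((k-q)(k-q-1)/2)β + (d+1-k)(k-q)β`. -/
noncomputable def Bfun (k d q : ℕ) (α β : ℝ) : ℝ :=
  (q : ℝ) * α + (((k - q) * (k - q - 1) : ℕ) : ℝ) / 2 * β
    + (((d + 1 - k) * (k - q) : ℕ) : ℝ) * β


/-! ### Generic entropy lemmas -/

/-- Uniform distribution + additive surjective map: entropy is log of codomain size. -/
lemma entH_unif {Ω S : Type*} [Fintype Ω] [Nonempty Ω] [AddCommGroup Ω] [AddCommGroup S]
    [Fintype S] (X : Ω → S) (hadd : ∀ a b, X (a + b) = X a + X b)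
    (hsurj : Function.Surjective X) :
    entH (fun _ : Ω => (Fintype.card Ω : ℝ)⁻¹) X = Real.logb 2 (Fintype.card S) := by
  letI := Classical.decEq S
  have hS : Nonempty S := ⟨X (Classical.arbitrary Ω)⟩
  set f : Ω →+ S := AddMonoidHom.mk' X hadd with hf
  have hXf : ∀ ω, X ω = f ω := fun _ => rfl
  -- all fibers have the same size
  have hfib : ∀ s : S, (Finset.univ.filter (fun ω => X ω = s)).card
      = (Finset.univ.filter (fun ω => X ω = 0)).card := by
    intro s
    obtain ⟨a, ha⟩ := hsurj s
    refine Finset.card_nbij' (fun u => u - a) (fun u => u + a) ?_ ?_ ?_ ?_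
    · intro u hu
      simp only [mem_coe, mem_filter, mem_univ, true_and] at hu ⊢
      rw [hXf, map_sub, ← hXf, ← hXf, hu, ha, sub_self]
    · intro u hu
      simp only [mem_coe, mem_filter, mem_univ, true_and] at hu ⊢
      rw [hXf, map_add, ← hXf, ← hXf, hu, ha, zero_add]
    · intro u _; simp
    · intro u _; simp
  set c := (Finset.univ.filter (fun ω => X ω = 0)).card with hc
  have hcount : Fintype.card Ω = Fintype.card S * c := by
    have h1 : (Finset.univ : Finset Ω).card
        = ∑ s ∈ (Finset.univ : Finset S), (Finset.univ.filter (fun ω => X ω = s)).card :=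
      Finset.card_eq_sum_card_fiberwise (fun x _ => mem_univ (X x))
    rw [Fintype.card, h1]
    rw [Finset.sum_congr rfl (fun s _ => hfib s), Finset.sum_const, smul_eq_mul]
    simp [Finset.card_univ]
  have hcpos : 0 < c := by
    obtain ⟨a, ha⟩ := hsurj 0
    exact Finset.card_pos.2 ⟨a, by simp [hc, ha]⟩
  have hKpos : 0 < Fintype.card S := Fintype.card_pos
  have hNpos : 0 < Fintype.card Ω := Fintype.card_pos
  have himg : Finset.univ.image X = Finset.univ := Finset.image_univ_of_surjective hsurj
  have hprob : ∀ s : S, (∑ ω ∈ Finset.univ.filter (fun ω => X ω = s),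
      (Fintype.card Ω : ℝ)⁻¹) = ((Fintype.card S : ℝ))⁻¹ := by
    intro s
    rw [Finset.sum_const, hfib s, nsmul_eq_mul]
    have hN : (Fintype.card Ω : ℝ) = (Fintype.card S : ℝ) * (c : ℝ) := by
      rw [hcount]; push_cast; ring
    rw [hN]
    field_simp
  show (∑ s ∈ Finset.univ.image X,
    -((∑ ω ∈ Finset.univ.filter (fun ω => X ω = s), (Fintype.card Ω : ℝ)⁻¹) *
       Real.logb 2 (∑ ω ∈ Finset.univ.filter (fun ω => X ω = s), (Fintype.card Ω : ℝ)⁻¹)))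
    = Real.logb 2 (Fintype.card S)
  rw [himg]
  have hterm : ∀ s : S,
      -((∑ ω ∈ Finset.univ.filter (fun ω => X ω = s), (Fintype.card Ω : ℝ)⁻¹) *
       Real.logb 2 (∑ ω ∈ Finset.univ.filter (fun ω => X ω = s), (Fintype.card Ω : ℝ)⁻¹))
      = ((Fintype.card S : ℝ))⁻¹ * Real.logb 2 (Fintype.card S) := by
    intro s
    rw [hprob s, Real.logb_inv]
    ring
  rw [Finset.sum_congr rfl (fun s _ => hterm s), Finset.sum_const, nsmul_eq_mul, Fintype.card]
  have : (Fintype.card S : ℝ) ≠ 0 := by positivity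
  rw [Fintype.card] at this
  field_simp

/-- If `X` is determined by `Y`, then `H(X|Y) = 0`. -/
lemma condH_det {Ω S T : Type*} [Fintype Ω] (P : Ω → ℝ) (X : Ω → S) (Y : Ω → T)
    (h : ∀ ω ω', Y ω = Y ω' → X ω = X ω') : condH P X Y = 0 := by
  letI := Classical.decEq S
  letI := Classical.decEq T
  letI : DecidableEq (S × T) := Classical.decEq _
  rw [condH, sub_eq_zero]
  show (∑ s ∈ Finset.univ.image (fun ω => (X ω, Y ω)),
      -((∑ ω ∈ Finset.univ.filter (fun ω => (X ω, Y ω) = s), P ω) *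
        Real.logb 2 (∑ ω ∈ Finset.univ.filter (fun ω => (X ω, Y ω) = s), P ω)))
    = ∑ t ∈ Finset.univ.image Y,
      -((∑ ω ∈ Finset.univ.filter (fun ω => Y ω = t), P ω) *
        Real.logb 2 (∑ ω ∈ Finset.univ.filter (fun ω => Y ω = t), P ω))
  refine Finset.sum_bij (fun s _ => s.2) ?_ ?_ ?_ ?_
  · intro s hs
    obtain ⟨ω, _, hω⟩ := Finset.mem_image.1 hs
    exact Finset.mem_image.2 ⟨ω, mem_univ ω, congrArg Prod.snd hω⟩
  · intro s₁ hs₁ s₂ hs₂ hss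
    obtain ⟨ω₁, _, hω₁⟩ := Finset.mem_image.1 hs₁
    obtain ⟨ω₂, _, hω₂⟩ := Finset.mem_image.1 hs₂
    subst hω₁; subst hω₂
    simp only at hss
    exact Prod.ext (h ω₁ ω₂ hss) hss
  · intro t ht
    obtain ⟨ω, _, hω⟩ := Finset.mem_image.1 ht
    exact ⟨(X ω, Y ω), Finset.mem_image.2 ⟨ω, mem_univ ω, rfl⟩, hω⟩
  · intro s hs
    obtain ⟨ω₀, _, hω₀⟩ := Finset.mem_image.1 hs
    have hfil : Finset.univ.filter (fun ω => (X ω, Y ω) = s)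
        = Finset.univ.filter (fun ω => Y ω = s.2) := by
      ext ω
      simp only [mem_filter, mem_univ, true_and]
      constructor
      · intro he; rw [← he]
      · intro he
        subst hω₀
        simp only at he
        exact Prod.ext (h ω ω₀ he) he
    rw [hfil]

/-! ### The construction -/

/-- Some element different from `m`. -/
noncomputable def tauF (n : ℕ) (m : Fin n) : Fin n :=
  if h : ∃ c : Fin n, c ≠ m then h.choose else m

lemma tauF_ne {n : ℕ} (hn : 2 ≤ n) (m : Fin n) : tauF n m ≠ m := by
  have h : ∃ c : Fin n, c ≠ m := by
    apply Fintype.exists_ne_of_one_lt_card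
    simp only [Fintype.card_fin]; omega
  rw [tauF, dif_pos h]
  exact h.choose_spec

/-- Some element different from both `a` and `b`. -/
noncomputable def pickF (n : ℕ) (a b : Fin n) : Fin n :=
  if h : ∃ c : Fin n, c ≠ a ∧ c ≠ b then h.choose else a

lemma pickF_spec {n : ℕ} (hn : 3 ≤ n) (a b : Fin n) : pickF n a b ≠ a ∧ pickF n a b ≠ b := by
  have h : ∃ c : Fin n, c ≠ a ∧ c ≠ b := by
    have hcard : 0 < ((Finset.univ : Finset (Fin n)) \ {a, b}).card := by
      rw [Finset.card_sdiff_of_subset (Finset.subset_univ _)]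
      have h2 : ({a, b} : Finset (Fin n)).card ≤ 2 :=
        (Finset.card_insert_le _ _).trans (by simp)
      simp only [Finset.card_univ, Fintype.card_fin]
      omega
    obtain ⟨c, hc⟩ := Finset.card_pos.1 hcard
    rw [Finset.mem_sdiff, Finset.mem_insert, Finset.mem_singleton] at hc
    exact ⟨c, fun h => hc.2 (Or.inl h), fun h => hc.2 (Or.inr h)⟩
  rw [pickF, dif_pos h]
  exact h.choose_spec

lemma card_ne_one {n : ℕ} (j : Fin n) : Fintype.card {m : Fin n // m ≠ j} = n - 1 := by
  rw [Fintype.card_subtype]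
  have : Finset.univ.filter (fun m : Fin n => m ≠ j) = Finset.univ \ {j} := by
    ext m; simp
  rw [this, Finset.card_sdiff_of_subset (Finset.subset_univ _)]
  simp

lemma card_ne_two {n : ℕ} {a b : Fin n} (hab : a ≠ b) :
    Fintype.card {m : Fin n // m ≠ a ∧ m ≠ b} = n - 2 := by
  rw [Fintype.card_subtype]
  have : Finset.univ.filter (fun m : Fin n => m ≠ a ∧ m ≠ b) = Finset.univ \ {a, b} := by
    ext m; simp [not_or]
  rw [this, Finset.card_sdiff_of_subset (Finset.subset_univ _), Finset.card_pair hab]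
  simp

/-- The sample space: for each column `m`, one free bit for each row other than
`m` and `tauF n m`. -/
abbrev OmSp (n : ℕ) : Type := ∀ m : Fin n, ({i : Fin n // i ≠ m ∧ i ≠ tauF n m} → ZMod 2)

lemma card_OmSp {n : ℕ} (hn : 2 ≤ n) : Fintype.card (OmSp n) = 2 ^ (n * (n - 2)) := by
  rw [Fintype.card_pi]
  have h : ∀ m : Fin n, Fintype.card ({i : Fin n // i ≠ m ∧ i ≠ tauF n m} → ZMod 2)
      = 2 ^ (n - 2) := by
    intro m
    rw [Fintype.card_fun, ZMod.card, card_ne_two (Ne.symm (tauF_ne hn m))]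
  rw [Finset.prod_congr rfl (fun m _ => h m), Finset.prod_const]
  simp only [Finset.card_univ, Fintype.card_fin]
  rw [← pow_mul, mul_comm]

/-- The full array of bits: free bits are read off directly, the diagonal is `0`,
and row `tauF n m` of column `m` is the sum of the free bits of that column. -/
noncomputable def bval {n : ℕ} (ω : OmSp n) (i m : Fin n) : ZMod 2 :=
  if h : i ≠ m ∧ i ≠ tauF n m then ω m ⟨i, h⟩
  else if i = tauF n m then ∑ x, ω m x else 0

lemma bval_free {n : ℕ} (ω : OmSp n) {i m : Fin n} (h : i ≠ m ∧ i ≠ tauF n m) :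
    bval ω i m = ω m ⟨i, h⟩ := dif_pos h

lemma bval_diag {n : ℕ} (hn : 2 ≤ n) (ω : OmSp n) (m : Fin n) : bval ω m m = 0 := by
  rw [bval, dif_neg (by simp), if_neg (fun h => tauF_ne hn m h.symm)]

lemma bval_tau {n : ℕ} (hn : 2 ≤ n) (ω : OmSp n) (m : Fin n) :
    bval ω (tauF n m) m = ∑ x, ω m x := by
  rw [bval, dif_neg (by simp), if_pos rfl]

lemma bval_add {n : ℕ} (ω ω' : OmSp n) (i m : Fin n) :
    bval (ω + ω') i m = bval ω i m + bval ω' i m := by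
  unfold bval
  split_ifs with h h2
  · rfl
  · simp [Finset.sum_add_distrib]
  · simp

lemma zmod2_add_self : ∀ a : ZMod 2, a + a = 0 := by decide

lemma zmod2_eq_of_add_eq_zero : ∀ a b : ZMod 2, a + b = 0 → a = b := by decide

/-- Column sums of `bval` vanish. -/
lemma bval_colsum {n : ℕ} (hn : 2 ≤ n) (ω : OmSp n) (m : Fin n) :
    ∑ i, bval ω i m = 0 := by
  classical
  have htm : tauF n m ≠ m := tauF_ne hn m
  have h1 : ∑ i, bval ω i m
      = bval ω (tauF n m) m + ∑ i ∈ Finset.univ.erase (tauF n m), bval ω i m :=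
    (Finset.add_sum_erase _ _ (Finset.mem_univ _)).symm
  have h2 : ∑ i ∈ Finset.univ.erase (tauF n m), bval ω i m
      = bval ω m m + ∑ i ∈ (Finset.univ.erase (tauF n m)).erase m, bval ω i m :=
    (Finset.add_sum_erase _ _ (by simp [htm.symm])).symm
  have h3 : ∑ i ∈ (Finset.univ.erase (tauF n m)).erase m, bval ω i m = ∑ x, ω m x := by
    have hset : (Finset.univ.erase (tauF n m)).erase m
        = Finset.univ.filter (fun i : Fin n => i ≠ m ∧ i ≠ tauF n m) := by
      ext i
      constructor
      · intro h; simp only [Finset.mem_erase, Finset.mem_univ, and_true] at h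
        simp only [Finset.mem_filter, Finset.mem_univ, true_and]; tauto
      · intro h; simp only [Finset.mem_filter, Finset.mem_univ, true_and] at h
        simp only [Finset.mem_erase, Finset.mem_univ, and_true]; tauto
    rw [hset, Finset.sum_subtype (p := fun i : Fin n => i ≠ m ∧ i ≠ tauF n m) _
      (fun i => by simp) (fun i => bval ω i m)]
    exact Finset.sum_congr rfl (fun x _ => bval_free ω x.2)
  rw [h1, h2, h3, bval_diag hn, bval_tau hn]
  rw [zero_add]
  exact zmod2_add_self _

lemma bval_row {n : ℕ} (hn : 2 ≤ n) (ω : OmSp n) (t m : Fin n) :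
    bval ω t m = ∑ i ∈ Finset.univ.erase t, bval ω i m := by
  classical
  apply zmod2_eq_of_add_eq_zero
  rw [Finset.add_sum_erase Finset.univ (fun i => bval ω i m) (Finset.mem_univ t)]
  exact bval_colsum hn ω m

/-- One can prescribe any single row of the array off its diagonal entry. -/
lemma exists_bval_row {n : ℕ} (hn : 3 ≤ n) (r : Fin n) (w : Fin n → ZMod 2) :
    ∃ ω : OmSp n, ∀ m, m ≠ r → bval ω r m = w m := by
  classical
  have hn2 : 2 ≤ n := by omega
  refine ⟨fun m x => if hm : m = r then 0 else
    (if tauF n m = r then (if x = ⟨pickF n m (tauF n m),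
      (pickF_spec hn m (tauF n m))⟩ then w m else 0)
     else (if (x : Fin n) = r then w m else 0)), fun m hmr => ?_⟩
  by_cases hτ : tauF n m = r
  · have hfree : ¬(r ≠ m ∧ r ≠ tauF n m) := fun h => h.2 hτ.symm
    rw [bval, dif_neg hfree, if_pos hτ.symm]
    have hthis : ∀ x : {i : Fin n // i ≠ m ∧ i ≠ tauF n m},
        (if hm : m = r then (0 : ZMod 2) else
          (if tauF n m = r then (if x = ⟨pickF n m (tauF n m),
            (pickF_spec hn m (tauF n m))⟩ then w m else 0)
          else (if (x : Fin n) = r then w m else 0)))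
        = (if x = ⟨pickF n m (tauF n m), (pickF_spec hn m (tauF n m))⟩ then w m else 0) := by
      intro x
      rw [dif_neg hmr, if_pos hτ]
    rw [Finset.sum_congr rfl (fun x _ => hthis x)]
    simp [Finset.sum_ite_eq']
  · have hfree : r ≠ m ∧ r ≠ tauF n m := ⟨Ne.symm hmr, fun h => hτ h.symm⟩
    rw [bval_free _ hfree, dif_neg hmr, if_neg hτ, if_pos rfl]

lemma logb_two_pow (e : ℕ) : Real.logb 2 (((2 : ℕ) ^ e : ℕ) : ℝ) = e := by
  push_cast
  rw [Real.logb_pow, Real.logb_self_eq_one (by norm_num), mul_one]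

/-- for every `d ≥ 3` there is an exact-repair regenerating code with
parameters `(d+1, d, d)` and secondary parameters `(B, α, β) = (d² - 1, d, d - 1)`
(entropy in bits, as in the definition of `entH`); moreover `B = B_{k-1}` and
`B < B_k`, `B < B_{k-2}`. -/
theorem stmt_19 (d : ℕ) (hd : 3 ≤ d) :
    (∃ (Ω : Type) (inst : Fintype Ω) (P : Ω → ℝ)
       (σM : Type) (σW : Fin (d + 1) → Type) (σS : Fin (d + 1) → Fin (d + 1) → Type)
       (M : Ω → σM) (W : ∀ j, Ω → σW j) (S : ∀ i j, Ω → σS i j),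
       @IsRegenCode Ω inst (d + 1) d d ((d : ℝ) ^ 2 - 1) (d : ℝ) ((d : ℝ) - 1)
         P σM σW σS M W S)
    ∧ (d : ℝ) ^ 2 - 1 = Bfun d d (d - 1) (d : ℝ) ((d : ℝ) - 1)
    ∧ (d : ℝ) ^ 2 - 1 < Bfun d d d (d : ℝ) ((d : ℝ) - 1)
    ∧ (d : ℝ) ^ 2 - 1 < Bfun d d (d - 2) (d : ℝ) ((d : ℝ) - 1) := by
  have hdR : (3 : ℝ) ≤ (d : ℝ) := by exact_mod_cast hd
  have hn : 2 ≤ d + 1 := by omega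
  have hn3 : 3 ≤ d + 1 := by omega
  refine ⟨?_, ?_, ?_, ?_⟩
  · -- existence of the code
    refine ⟨OmSp (d + 1), inferInstance, fun _ => (Fintype.card (OmSp (d + 1)) : ℝ)⁻¹,
      OmSp (d + 1), fun j => ({m : Fin (d + 1) // m ≠ j} → ZMod 2),
      fun i j => ({m : Fin (d + 1) // m ≠ i ∧ m ≠ j} → ZMod 2),
      id, fun j ω => (fun m => bval ω j m.1), fun i j ω => (fun m => bval ω i m.1), ?_⟩
    have hNpos : 0 < Fintype.card (OmSp (d + 1)) := Fintype.card_pos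
    have hNne : (Fintype.card (OmSp (d + 1)) : ℝ) ≠ 0 := by positivity
    refine
      { prob_nonneg := fun ω => by positivity
        prob_sum := ?_
        hk := by omega
        hkd := le_refl d
        hdn := le_refl (d + 1)
        hB := by nlinarith
        hα := by positivity
        hβ := by linarith
        hMB := ?_
        hWα := ?_
        hWM := ?_
        hMW := ?_
        hSβ := ?_
        hSW := ?_
        hWS := ?_ }
    · -- prob_sum
      rw [Finset.sum_const, Finset.card_univ, nsmul_eq_mul, mul_inv_cancel₀ hNne]
    · -- hMB
      rw [entH_unif id (fun _ _ => rfl) Function.surjective_id, card_OmSp hn]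
      have he : d + 1 - 2 = d - 1 := by omega
      rw [he, logb_two_pow]
      push_cast [Nat.cast_sub (by omega : 1 ≤ d)]
      ring
    · -- hWα
      intro j
      have hsurj : Function.Surjective
          (fun ω : OmSp (d + 1) => (fun m : {m : Fin (d + 1) // m ≠ j} => bval ω j m.1)) := by
        intro w
        obtain ⟨ω, hω⟩ := exists_bval_row hn3 j
          (fun m => if h : m = j then 0 else w ⟨m, h⟩)
        refine ⟨ω, funext fun m => ?_⟩
        show bval ω j m.1 = w m
        rw [hω m.1 m.2, dif_neg m.2]
      rw [entH_unif _ (fun a b => funext fun m => bval_add a b j m.1) hsurj]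
      rw [Fintype.card_fun, ZMod.card, card_ne_one j]
      have he : d + 1 - 1 = d := by omega
      rw [he, logb_two_pow]
    · -- hWM
      intro j
      exact condH_det _ _ _ (fun ω ω' e => by simp only [id] at e; rw [e])
    · -- hMW
      intro J hJ
      refine condH_det _ _ _ (fun ω ω' hY => ?_)
      have hW : ∀ t, t ∈ J → ∀ mm : {mm : Fin (d + 1) // mm ≠ t},
          bval ω t mm.1 = bval ω' t mm.1 := by
        intro t ht mm
        exact congrFun (congrFun hY (⟨t, ht⟩ : J)) mm
      show ω = ω'
      funext m x
      have hb : bval ω x.1 m = bval ω' x.1 m := by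
        by_cases hiJ : (x.1 : Fin (d + 1)) ∈ J
        · exact hW x.1 hiJ ⟨m, Ne.symm x.2.1⟩
        · have hJeq : J = Finset.univ.erase x.1 := by
            apply Finset.eq_of_subset_of_card_le
            · intro t htJ
              exact Finset.mem_erase.2 ⟨fun he => hiJ (he ▸ htJ), Finset.mem_univ t⟩
            · rw [Finset.card_erase_of_mem (Finset.mem_univ _), Finset.card_univ,
                Fintype.card_fin]
              omega
          rw [bval_row hn ω x.1 m, bval_row hn ω' x.1 m]
          refine Finset.sum_congr rfl (fun t ht => ?_)
          by_cases htm : t = m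
          · subst htm; rw [bval_diag hn, bval_diag hn]
          · exact hW t (hJeq ▸ ht) ⟨m, Ne.symm htm⟩
      rw [bval_free ω x.2, bval_free ω' x.2] at hb
      exact hb
    · -- hSβ
      intro i j hij
      have hsurj : Function.Surjective
          (fun ω : OmSp (d + 1) =>
            (fun m : {m : Fin (d + 1) // m ≠ i ∧ m ≠ j} => bval ω i m.1)) := by
        intro w
        obtain ⟨ω, hω⟩ := exists_bval_row hn3 i
          (fun m => if h : m ≠ i ∧ m ≠ j then w ⟨m, h⟩ else 0)
        refine ⟨ω, funext fun m => ?_⟩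
        show bval ω i m.1 = w m
        rw [hω m.1 m.2.1, dif_pos m.2]
      rw [entH_unif _ (fun a b => funext fun m => bval_add a b i m.1) hsurj]
      rw [Fintype.card_fun, ZMod.card, card_ne_two hij]
      have he : d + 1 - 2 = d - 1 := by omega
      rw [he, logb_two_pow]
      push_cast [Nat.cast_sub (by omega : 1 ≤ d)]
      ring
    · -- hSW
      intro i j hij
      exact condH_det _ _ _
        (fun ω ω' hY => funext fun mm => congrFun hY ⟨mm.1, mm.2.1⟩)
    · -- hWS
      intro j I hI hjI
      refine condH_det _ _ _ (fun ω ω' hY => ?_)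
      have hS : ∀ t, t ∈ I → ∀ mm : {m : Fin (d + 1) // m ≠ t ∧ m ≠ j},
          bval ω t mm.1 = bval ω' t mm.1 := by
        intro t ht mm
        exact congrFun (congrFun hY (⟨t, ht⟩ : I)) mm
      funext mm
      show bval ω j mm.1 = bval ω' j mm.1
      rw [bval_row hn ω j mm.1, bval_row hn ω' j mm.1]
      refine Finset.sum_congr rfl (fun t ht => ?_)
      have htj : t ≠ j := (Finset.mem_erase.1 ht).1
      by_cases htm : t = mm.1
      · subst htm; rw [bval_diag hn, bval_diag hn]
      · have htI : t ∈ I := by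
          have hIeq : I = Finset.univ.erase j := by
            apply Finset.eq_of_subset_of_card_le
            · intro u hu
              exact Finset.mem_erase.2 ⟨fun he => hjI (he ▸ hu), Finset.mem_univ u⟩
            · rw [Finset.card_erase_of_mem (Finset.mem_univ _), Finset.card_univ,
                Fintype.card_fin]
              omega
          rw [hIeq]
          exact Finset.mem_erase.2 ⟨htj, Finset.mem_univ t⟩
        exact hS t htI ⟨mm.1, ⟨Ne.symm htm, mm.2⟩⟩
  · -- B = B_{k-1}
    rw [Bfun]
    have e1 : d - (d - 1) = 1 := by omega
    have e2 : d + 1 - d = 1 := by omega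
    rw [e1, e2]
    norm_num
    rw [Nat.cast_sub (by omega : 1 ≤ d)]
    push_cast
    ring
  · -- B < B_k
    rw [Bfun, Nat.sub_self]
    norm_num
    nlinarith
  · -- B < B_{k-2}
    rw [Bfun]
    have e1 : d - (d - 2) = 2 := by omega
    have e2 : d + 1 - d = 1 := by omega
    rw [e1, e2]
    norm_num
    rw [Nat.cast_sub (by omega : 2 ≤ d)]
    push_cast
    nlinarith
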